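/- Let G be a locally compact Hausdorff topological group with left Haar measure λ, and let μ be a positive linear functional on the space of bounded Borel measurable functions f : G → ℝ such that μ(1) = 1 and μ(f) = μ(f') whenever f = f' λ-almost everywhere. Then μ satisfies μ(f ∘ λ_g) = μ(f) for all bounded Borel functions f and all g ∈ G (where λ_g(x) = g·x) if and only if μ satisfies μ(f ∘ α) = μ(f) for all bounded Borel functions f and all Borel piecewise translations α of G. -/

import Mathlib

open MeasureTheory

/-- The space of bounded Borel measurable real-valued functions on `G`, as a submodule
of `G → ℝ`. -/
def BddBorel (G : Type*) [MeasurableSpace G] : Submodule ℝ (G → ℝ) where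
  carrier := {f : G → ℝ | Measurable f ∧ ∃ C : ℝ, ∀ x : G, |f x| ≤ C}
  add_mem' := by
    rintro f g ⟨hf, C, hC⟩ ⟨hg, D, hD⟩
    exact ⟨hf.add hg, C + D, fun x => (abs_add_le _ _).trans (add_le_add (hC x) (hD x))⟩
  zero_mem' := ⟨measurable_const, 0, fun x => by simp⟩
  smul_mem' := by
    rintro c f ⟨hf, C, hC⟩
    refine ⟨hf.const_smul c, |c| * C, fun x => ?_⟩
    rw [Pi.smul_apply, smul_eq_mul, abs_mul]
    exact mul_le_mul_of_nonneg_left (hC x) (abs_nonneg c)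

/-- A bijection `α : G → G` is a Borel piecewise translation if there is a finite
partition of `G` into Borel sets on each of which `α` agrees with a left translation. -/
def IsBorelPiecewiseTranslation {G : Type*} [Group G] [MeasurableSpace G]
    (α : Equiv.Perm G) : Prop :=
  ∃ 𝓟 : Finset (Set G),
    (∀ P ∈ 𝓟, MeasurableSet P) ∧
    (∀ x : G, ∃! P : Set G, P ∈ 𝓟 ∧ x ∈ P) ∧
    (∀ P ∈ 𝓟, ∃ g : G, ∀ x ∈ P, α x = g * x)

/-- A mean on `L∞(G)` (with respect to a left Haar measure) is
invariant under left translations if and only if it is invariant under all Borel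
piecewise translations. -/
theorem stmt_9 {G : Type*} [Group G] [TopologicalSpace G] [IsTopologicalGroup G]
    [LocallyCompactSpace G] [T2Space G] [MeasurableSpace G] [BorelSpace G]
    (lam : Measure G) [lam.IsHaarMeasure]
    (μ : ↥(BddBorel G) →ₗ[ℝ] ℝ)
    (hpos : ∀ f : ↥(BddBorel G), (∀ x : G, 0 ≤ (f : G → ℝ) x) → 0 ≤ μ f)
    (hone : ∀ f : ↥(BddBorel G), (∀ x : G, (f : G → ℝ) x = 1) → μ f = 1)
    (hae : ∀ f f' : ↥(BddBorel G),
      (∀ᵐ x ∂lam, (f : G → ℝ) x = (f' : G → ℝ) x) → μ f = μ f') :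
    (∀ (g : G) (f f' : ↥(BddBorel G)),
        (∀ x : G, (f' : G → ℝ) x = (f : G → ℝ) (g * x)) → μ f' = μ f) ↔
      (∀ α : Equiv.Perm G, IsBorelPiecewiseTranslation α →
        ∀ f f' : ↥(BddBorel G),
          (∀ x : G, (f' : G → ℝ) x = (f : G → ℝ) (α x)) → μ f' = μ f) := by
  classical
  constructor
  · intro hL α hα f f' hff'
    obtain ⟨𝓟, hmeas, hpart, htrans⟩ := hα
    obtain ⟨hfm, C, hC⟩ := f.2
    obtain ⟨hf'm, C', hC'⟩ := f'.2
    have htrans' : ∀ P : {P // P ∈ 𝓟}, ∃ g : G, ∀ x ∈ (P : Set G), α x = g * x :=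
      fun P => htrans P P.2
    choose g hg using htrans'
    -- the translated pieces
    set S : {P // P ∈ 𝓟} → Set G := fun P => (fun y => (g P)⁻¹ * y) ⁻¹' (P : Set G) with hS
    have hmemE : ∀ P : {P // P ∈ 𝓟},
        (Set.indicator (P : Set G) (f' : G → ℝ)) ∈ BddBorel G := by
      intro P
      refine ⟨hf'm.indicator (hmeas P P.2), max C' 0, fun x => ?_⟩
      by_cases hx : x ∈ (P : Set G)
      · rw [Set.indicator_of_mem hx]
        exact (hC' x).trans (le_max_left _ _)
      · rw [Set.indicator_of_notMem hx]
        simp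
    have hmemE' : ∀ P : {P // P ∈ 𝓟},
        (Set.indicator (S P) (f : G → ℝ)) ∈ BddBorel G := by
      intro P
      refine ⟨hfm.indicator ((measurable_const_mul ((g P)⁻¹)) (hmeas P P.2)),
        max C 0, fun x => ?_⟩
      by_cases hx : x ∈ S P
      · rw [Set.indicator_of_mem hx]
        exact (hC x).trans (le_max_left _ _)
      · rw [Set.indicator_of_notMem hx]
        simp
    set E : {P // P ∈ 𝓟} → ↥(BddBorel G) :=
      fun P => ⟨Set.indicator (P : Set G) (f' : G → ℝ), hmemE P⟩ with hE
    set E' : {P // P ∈ 𝓟} → ↥(BddBorel G) :=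
      fun P => ⟨Set.indicator (S P) (f : G → ℝ), hmemE' P⟩ with hE'
    -- f' is the sum of the E's
    have hsum1 : f' = ∑ P ∈ 𝓟.attach, E P := by
      apply Subtype.ext
      have : ((∑ P ∈ 𝓟.attach, E P : ↥(BddBorel G)) : G → ℝ)
          = ∑ P ∈ 𝓟.attach, (E P : G → ℝ) := by
        simp
      rw [this]
      funext x
      obtain ⟨P0, ⟨hP0mem, hxP0⟩, huniq⟩ := hpart x
      rw [Finset.sum_apply]
      rw [Finset.sum_eq_single_of_mem (⟨P0, hP0mem⟩ : {P // P ∈ 𝓟})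
          (Finset.mem_attach _ _)]
      · exact (Set.indicator_of_mem hxP0 _).symm
      · intro Q _ hQne
        by_cases hxQ : x ∈ (Q : Set G)
        · exact absurd (Subtype.ext (huniq Q ⟨Q.2, hxQ⟩)) hQne
        · exact Set.indicator_of_notMem hxQ _
    -- f is the sum of the E''s
    have hsum2 : f = ∑ P ∈ 𝓟.attach, E' P := by
      apply Subtype.ext
      have : ((∑ P ∈ 𝓟.attach, E' P : ↥(BddBorel G)) : G → ℝ)
          = ∑ P ∈ 𝓟.attach, (E' P : G → ℝ) := by
        simp
      rw [this]
      funext y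
      obtain ⟨P0, ⟨hP0mem, hxP0⟩, huniq⟩ := hpart (α.symm y)
      rw [Finset.sum_apply]
      rw [Finset.sum_eq_single_of_mem (⟨P0, hP0mem⟩ : {P // P ∈ 𝓟})
          (Finset.mem_attach _ _)]
      · have hy : y ∈ S ⟨P0, hP0mem⟩ := by
          have := hg ⟨P0, hP0mem⟩ (α.symm y) hxP0
          simp only [Equiv.apply_symm_apply] at this
          show (g ⟨P0, hP0mem⟩)⁻¹ * y ∈ P0
          rw [this, inv_mul_cancel_left]
          exact hxP0
        exact (Set.indicator_of_mem hy _).symm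
      · intro Q _ hQne
        by_cases hyQ : y ∈ S Q
        · exfalso
          have hzQ : (g Q)⁻¹ * y ∈ (Q : Set G) := hyQ
          have hαz : α ((g Q)⁻¹ * y) = y := by
            rw [hg Q _ hzQ, mul_inv_cancel_left]
          have hz : (g Q)⁻¹ * y = α.symm y := by
            apply α.injective
            rw [hαz, Equiv.apply_symm_apply]
          rw [hz] at hzQ
          exact hQne (Subtype.ext (huniq Q ⟨Q.2, hzQ⟩))
        · exact Set.indicator_of_notMem hyQ _
    -- each piece transforms correctly
    have hpiece : ∀ P : {P // P ∈ 𝓟}, μ (E P) = μ (E' P) := by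
      intro P
      apply hL (g P) (E' P) (E P)
      intro x
      show Set.indicator (P : Set G) (f' : G → ℝ) x
          = Set.indicator (S P) (f : G → ℝ) (g P * x)
      have hmem : (g P * x ∈ S P) ↔ x ∈ (P : Set G) := by
        show ((g P)⁻¹ * (g P * x) ∈ (P : Set G)) ↔ _
        rw [inv_mul_cancel_left]
      by_cases hx : x ∈ (P : Set G)
      · rw [Set.indicator_of_mem hx, Set.indicator_of_mem (hmem.2 hx)]
        rw [hff' x, hg P x hx]
      · rw [Set.indicator_of_notMem hx,
          Set.indicator_of_notMem (fun h => hx (hmem.1 h))]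
    rw [hsum1, hsum2, map_sum, map_sum]
    exact Finset.sum_congr rfl fun P _ => hpiece P
  · intro hR gg f f' hff'
    refine hR (Equiv.mulLeft gg) ?_ f f' ?_
    · refine ⟨{Set.univ}, ?_, ?_, ?_⟩
      · intro P hP
        rw [Finset.mem_singleton] at hP
        rw [hP]
        exact MeasurableSet.univ
      · intro x
        exact ⟨Set.univ, ⟨Finset.mem_singleton_self _, trivial⟩,
          fun P hP => Finset.mem_singleton.1 hP.1⟩
      · intro P hP
        exact ⟨gg, fun x _ => rfl⟩
    · intro x
      simpa using hff' x
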